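/- arXiv:1404.2839 — 3 statements merged into one kernel-verified Lean document; each statement's English description precedes it below -/
import Mathlib

section
/- An oracle A ⊆ ℕ is meager engulfing if and only if there exists an A-effectively meager set (an effective-in-A F_σ(A) class that is a union of uniformly Π⁰₁(A) nowhere dense classes) containing every nowhere dense Π⁰₁ class. -/
open Filter

namespace CichonAnalog

/-! ### Oracle computability -/

/-- Partial functions `ℕ →. ℕ` partial recursive relative to the oracle `A ⊆ ℕ`.
This is Mathlib's `Nat.Partrec` with an extra base case for the characteristic
function of the oracle. -/
inductive RecursiveIn (A : Set ℕ) : (ℕ →. ℕ) → Prop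
  | zero : RecursiveIn A (pure 0)
  | succ : RecursiveIn A ↑Nat.succ
  | left : RecursiveIn A ↑fun n : ℕ => n.unpair.1
  | right : RecursiveIn A ↑fun n : ℕ => n.unpair.2
  | oracle : RecursiveIn A ↑fun n : ℕ => A.indicator (fun _ => 1) n
  | pair {f g} : RecursiveIn A f → RecursiveIn A g →
      RecursiveIn A fun n => Nat.pair <$> f n <*> g n
  | comp {f g} : RecursiveIn A f → RecursiveIn A g →
      RecursiveIn A fun n => g n >>= f
  | prec {f g} : RecursiveIn A f → RecursiveIn A g →
      RecursiveIn A (Nat.unpaired fun a n =>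
        n.rec (f a) fun y IH => do let i ← IH; g (Nat.pair a (Nat.pair y i)))
  | rfind {f} : RecursiveIn A f →
      RecursiveIn A fun a => Nat.rfind fun n => (fun m => m = 0) <$> f (Nat.pair a n)

/-- The partial function `f` (between coded spaces) is partial recursive in the oracle `A`. -/
def PartrecIn (A : Set ℕ) {α σ : Type} [Primcodable α] [Primcodable σ] (f : α →. σ) : Prop :=
  RecursiveIn A fun n =>
    Part.bind ↑(Encodable.decode (α := α) n) fun a => (f a).map Encodable.encode

/-- `f ≤_T A` : the (total) function `f` is computable from the oracle `A`. -/
def ComputableIn (A : Set ℕ) {α σ : Type} [Primcodable α] [Primcodable σ] (f : α → σ) : Prop :=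
  PartrecIn A (f : α →. σ)

/-- `W` is computably enumerable in the oracle `A`. -/
def CEIn (A : Set ℕ) {α : Type} [Primcodable α] (W : Set α) : Prop :=
  ∃ f : α →. ℕ, PartrecIn A f ∧ ∀ a, a ∈ W ↔ (f a).Dom

/-- `W` is computably enumerable (unrelativized). -/
def CE {α : Type} [Primcodable α] (W : Set α) : Prop :=
  ∃ f : α →. ℕ, Partrec f ∧ ∀ a, a ∈ W ↔ (f a).Dom

/-! ### Cantor space, `Π⁰₁` classes, effective meagerness -/

/-- The basic clopen set (cylinder) of the finite binary string `σ` in Cantor space. -/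
def Cyl (σ : List Bool) : Set (ℕ → Bool) :=
  {x | ∀ i, i < σ.length → x i = σ.getD i false}

/-- `P` is a `Π⁰₁(A)` class: a closed subset of Cantor space whose complement is the
union of basic clopen sets over a set of strings c.e. in `A`. -/
def Pi01In (A : Set ℕ) (P : Set (ℕ → Bool)) : Prop :=
  ∃ W : Set (List Bool), CEIn A W ∧ P = (⋃ σ ∈ W, Cyl σ)ᶜ

/-- `P` is a (plain) `Π⁰₁` class. -/
def Pi01 (P : Set (ℕ → Bool)) : Prop :=
  ∃ W : Set (List Bool), CE W ∧ P = (⋃ σ ∈ W, Cyl σ)ᶜ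

/-- `C` is a uniformly `Π⁰₁(A)` sequence of classes. -/
def UnifPi01In (A : Set ℕ) (C : ℕ → Set (ℕ → Bool)) : Prop :=
  ∃ W : Set (ℕ × List Bool), CEIn A W ∧
    ∀ m, C m = (⋃ σ ∈ {s | (m, s) ∈ W}, Cyl σ)ᶜ

/-- `C` is a uniformly `Π⁰₁` sequence of classes. -/
def UnifPi01 (C : ℕ → Set (ℕ → Bool)) : Prop :=
  ∃ W : Set (ℕ × List Bool), CE W ∧
    ∀ m, C m = (⋃ σ ∈ {s | (m, s) ∈ W}, Cyl σ)ᶜ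

/-- `S` is effectively meager relative to `A`: it is contained in the union of a
uniformly `Π⁰₁(A)` sequence of nowhere dense classes. -/
def EffMeagerIn (A : Set ℕ) (S : Set (ℕ → Bool)) : Prop :=
  ∃ C : ℕ → Set (ℕ → Bool), UnifPi01In A C ∧ (∀ m, IsNowhereDense (C m)) ∧ S ⊆ ⋃ m, C m

/-- `S` is effectively meager (unrelativized). -/
def EffMeager (S : Set (ℕ → Bool)) : Prop :=
  ∃ C : ℕ → Set (ℕ → Bool), UnifPi01 C ∧ (∀ m, IsNowhereDense (C m)) ∧ S ⊆ ⋃ m, C m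

/-- `A` is meager engulfing: some `A`-effectively meager set contains every
effectively meager set. -/
def MeagerEngulfing (A : Set ℕ) : Prop :=
  ∃ S, EffMeagerIn A S ∧ ∀ T, EffMeager T → T ⊆ S

/-- `A` is weakly meager engulfing: some `A`-effectively meager set contains every
computable element of Cantor space. -/
def WeaklyMeagerEngulfing (A : Set ℕ) : Prop :=
  ∃ S, EffMeagerIn A S ∧ ∀ x : ℕ → Bool, Computable x → x ∈ S

/-- `V` is a computable set of finite binary strings. -/
def ComputableStringSet (V : Set (List Bool)) : Prop :=
  ∃ χ : List Bool → Bool, Computable χ ∧ ∀ s, s ∈ V ↔ χ s = true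

/-- `V` is a dense set of finite binary strings: every string has an extension in `V`. -/
def DenseStringSet (V : Set (List Bool)) : Prop :=
  ∀ σ : List Bool, ∃ τ ∈ V, σ <+: τ

/-- `x ∈ 2^ω` is weakly 1-generic: for every computable dense set `V` of finite
binary strings, some initial segment of `x` lies in `V`. -/
def Weakly1Generic (x : ℕ → Bool) : Prop :=
  ∀ V : Set (List Bool), ComputableStringSet V → DenseStringSet V →
    ∃ n, (List.ofFn fun i : Fin n => x i) ∈ V

/-! ### Domination properties -/

/-- `A` is high: `A` computes a function dominating every total computable function. -/
def High (A : Set ℕ) : Prop :=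
  ∃ f : ℕ → ℕ, ComputableIn A f ∧
    ∀ g : ℕ → ℕ, Computable g → ∀ᶠ n in atTop, g n ≤ f n

/-- `A` is of hyperimmune degree: `A` computes a function not dominated by any
computable function. -/
def HyperimmuneDegree (A : Set ℕ) : Prop :=
  ∃ f : ℕ → ℕ, ComputableIn A f ∧
    ∀ g : ℕ → ℕ, Computable g → ∃ᶠ n in atTop, g n < f n

/-- `A` is of hyperimmune-free degree: every function computable in `A` is dominated
by a total computable function. -/
def HyperimmuneFree (A : Set ℕ) : Prop :=
  ∀ f : ℕ → ℕ, ComputableIn A f →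
    ∃ g : ℕ → ℕ, Computable g ∧ ∀ᶠ n in atTop, f n ≤ g n

/-! ### Measure on Cantor space, Kurtz and Schnorr tests -/

open scoped Classical in
/-- The uniform measure of the clopen set `⋃ σ ∈ F, [σ]` determined by the finite
list `F` of binary strings: count the binary strings of maximal length extending
some member of `F`, and normalize. -/
noncomputable def listMeasure (F : List (List Bool)) : ℚ :=
  letI k := (F.map List.length).foldr max 0
  ((Finset.univ.filter fun v : Fin k → Bool =>
      ∃ σ ∈ F, σ <+: List.ofFn v).card : ℚ) / 2 ^ k

/-- The clopen subset of Cantor space given explicitly as a finite union of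
basic clopen sets. -/
def ClopSet (F : List (List Bool)) : Set (ℕ → Bool) := ⋃ σ ∈ F, Cyl σ

/-- The effectively open subset of Cantor space enumerated by the sequence of
finite stages `g`. -/
def OpenSet (g : ℕ → List (List Bool)) : Set (ℕ → Bool) := ⋃ s, ClopSet (g s)

/-- The measure of the open set enumerated by the stages `g`: the supremum of the
measures of its finite partial unions. -/
noncomputable def openMeasure (g : ℕ → List (List Bool)) : ℝ :=
  ⨆ s : ℕ, (listMeasure ((List.range (s + 1)).flatMap g) : ℝ)

/-- A Kurtz test relative to `A`: an `A`-computable sequence of explicitly given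
clopen sets, the `m`-th of measure at most `2 ^ (-m)`. -/
def KurtzTestIn (A : Set ℕ) (G : ℕ → List (List Bool)) : Prop :=
  ComputableIn A G ∧ ∀ m, listMeasure (G m) ≤ (1 / 2) ^ m

/-- A (plain) Kurtz test. -/
def KurtzTest (G : ℕ → List (List Bool)) : Prop :=
  Computable G ∧ ∀ m, listMeasure (G m) ≤ (1 / 2) ^ m

/-- A Schnorr test relative to `A`: an `A`-computable doubly indexed sequence of finite
stages such that the `m`-th effectively open set `⋃ s, ClopSet (g m s)` has measure at
most `2 ^ (-m)`, and this measure is a real computable in `A` uniformly in `m`. -/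
def SchnorrTestIn (A : Set ℕ) (g : ℕ → ℕ → List (List Bool)) : Prop :=
  ComputableIn A (fun p : ℕ × ℕ => g p.1 p.2) ∧
  (∀ m, openMeasure (g m) ≤ (1 / 2) ^ m) ∧
  ∃ q : ℕ × ℕ → ℚ, ComputableIn A q ∧
    ∀ m k, |openMeasure (g m) - (q (m, k) : ℝ)| ≤ (1 / 2) ^ k

/-- A (plain) Schnorr test. -/
def SchnorrTest (g : ℕ → ℕ → List (List Bool)) : Prop :=
  Computable (fun p : ℕ × ℕ => g p.1 p.2) ∧
  (∀ m, openMeasure (g m) ≤ (1 / 2) ^ m) ∧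
  ∃ q : ℕ × ℕ → ℚ, Computable q ∧
    ∀ m k, |openMeasure (g m) - (q (m, k) : ℝ)| ≤ (1 / 2) ^ k

/-- `N` is Schnorr null relative to `A`. -/
def SchnorrNullIn (A : Set ℕ) (N : Set (ℕ → Bool)) : Prop :=
  ∃ g, SchnorrTestIn A g ∧ N ⊆ ⋂ m, OpenSet (g m)

/-- `N` is Schnorr null (unrelativized). -/
def SchnorrNull (N : Set (ℕ → Bool)) : Prop :=
  ∃ g, SchnorrTest g ∧ N ⊆ ⋂ m, OpenSet (g m)

/-- `x ∈ 2^ω` is Schnorr random: it belongs to no Schnorr null set. -/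
def SchnorrRandom (x : ℕ → Bool) : Prop := ∀ N, SchnorrNull N → x ∉ N

/-- `A` is Kurtz engulfing: there is an `A`-computable sequence of Kurtz tests relative
to `A` such that every Kurtz null set is contained in the null set of one of them. -/
def KurtzEngulfing (A : Set ℕ) : Prop :=
  ∃ G : ℕ → ℕ → List (List Bool),
    ComputableIn A (fun p : ℕ × ℕ => G p.1 p.2) ∧
    (∀ i m, listMeasure (G i m) ≤ (1 / 2) ^ m) ∧
    ∀ L, KurtzTest L → ∃ i, (⋂ m, ClopSet (L m)) ⊆ ⋂ m, ClopSet (G i m)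

/-- `A` is weakly Kurtz engulfing: there is an `A`-computable sequence of Kurtz tests
relative to `A` such that the union of their null sets contains every computable
element of Cantor space. -/
def WeaklyKurtzEngulfing (A : Set ℕ) : Prop :=
  ∃ G : ℕ → ℕ → List (List Bool),
    ComputableIn A (fun p : ℕ × ℕ => G p.1 p.2) ∧
    (∀ i m, listMeasure (G i m) ≤ (1 / 2) ^ m) ∧
    ∀ x : ℕ → Bool, Computable x → ∃ i, x ∈ ⋂ m, ClopSet (G i m)

/-- `A` is weakly Schnorr engulfing: some set Schnorr null relative to `A` contains
every computable element of Cantor space. -/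
def WeaklySchnorrEngulfing (A : Set ℕ) : Prop :=
  ∃ N, SchnorrNullIn A N ∧ ∀ x : ℕ → Bool, Computable x → x ∈ N

/-! ### DNR and PA degrees -/

/-- The `e`-th partial computable function. -/
noncomputable def phi (e : ℕ) : ℕ →. ℕ := (Denumerable.ofNat Nat.Partrec.Code e).eval

/-- `h` is diagonally nonrecursive. -/
def DNRFun (h : ℕ → ℕ) : Prop := ∀ e, ∀ y ∈ phi e e, h e ≠ y

/-- `A` is DNR: `A` computes a diagonally nonrecursive function. -/
def DNRDegree (A : Set ℕ) : Prop := ∃ h : ℕ → ℕ, ComputableIn A h ∧ DNRFun h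

/-- `A` is PA: `A` computes a `{0,1}`-valued diagonally nonrecursive function. -/
def PA (A : Set ℕ) : Prop :=
  ∃ h : ℕ → ℕ, ComputableIn A h ∧ (∀ e, h e ≤ 1) ∧ DNRFun h

/-! ### Traces -/

/-- The trace `σ` (satisfying `|σ n| ≤ n`) traces the function `f` if
`f n ∈ σ n` for all but finitely many `n`. -/
def Traces (σ : ℕ → Finset ℕ) (f : ℕ → ℕ) : Prop := ∀ᶠ n in atTop, f n ∈ σ n

/-- `σ` is a `(D, g)`-trace relative to `A`: `D` is infinite and c.e. in `A`, `g` is a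
partial `A`-computable function with `D ⊆ dom g` and `g n ≥ n` on its domain, and `σ`
is partial `A`-computable, defined on `D`, with `|σ n| < g n` for all `n ∈ D`. -/
def IsDGTraceIn (A : Set ℕ) (D : Set ℕ) (g : ℕ →. ℕ) (σ : ℕ →. Finset ℕ) : Prop :=
  D.Infinite ∧ CEIn A D ∧ PartrecIn A g ∧ D ⊆ g.Dom ∧ (∀ n, ∀ y ∈ g n, n ≤ y) ∧
  PartrecIn A σ ∧ D ⊆ σ.Dom ∧ ∀ n ∈ D, ∀ S ∈ σ n, ∀ b ∈ g n, S.card < b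

/-- `σ` is a `(D, g)`-trace (unrelativized). -/
def IsDGTrace (D : Set ℕ) (g : ℕ →. ℕ) (σ : ℕ →. Finset ℕ) : Prop :=
  D.Infinite ∧ CE D ∧ Partrec g ∧ D ⊆ g.Dom ∧ (∀ n, ∀ y ∈ g n, n ≤ y) ∧
  Partrec σ ∧ D ⊆ σ.Dom ∧ ∀ n ∈ D, ∀ S ∈ σ n, ∀ b ∈ g n, S.card < b

/-- The `(D, g)`-trace `σ` traces `f`: `f n ∈ σ n` for all but finitely many `n ∈ D`. -/
def DGTraces (D : Set ℕ) (σ : ℕ →. Finset ℕ) (f : ℕ → ℕ) : Prop :=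
  ∀ᶠ n in atTop, n ∈ D → ∀ S ∈ σ n, f n ∈ S

/-- `A` is meager engulfing iff some `A`-effectively meager set contains
every nowhere dense `Π⁰₁` class. -/
theorem stmt2 (A : Set ℕ) :
    MeagerEngulfing A ↔
      ∃ S, EffMeagerIn A S ∧
        ∀ P : Set (ℕ → Bool), Pi01 P → IsNowhereDense P → P ⊆ S := by
  constructor
  · rintro ⟨S, hS, hall⟩
    refine ⟨S, hS, fun P hP hnd => hall P ?_⟩
    obtain ⟨W, ⟨f, hf, hfd⟩, hPe⟩ := hP
    refine ⟨fun _ => P,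
      ⟨{p : ℕ × List Bool | p.2 ∈ W},
        ⟨fun p => f p.2, hf.comp Computable.snd, fun p => hfd p.2⟩,
        fun m => hPe⟩,
      fun _ => hnd, fun x hx => Set.mem_iUnion.2 ⟨0, hx⟩⟩
  · rintro ⟨S, hS, hall⟩
    refine ⟨S, hS, fun T hT => ?_⟩
    obtain ⟨C, ⟨W, ⟨f, hf, hfd⟩, hCe⟩, hnd, hsub⟩ := hT
    refine hsub.trans (Set.iUnion_subset fun m => hall (C m) ?_ (hnd m))
    exact ⟨{s | (m, s) ∈ W},
      ⟨fun s => f (m, s), hf.comp ((Computable.const m).pair Computable.id),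
        fun s => hfd (m, s)⟩, hCe m⟩

end CichonAnalog
end

section
/- Every PA oracle A ⊆ ℕ is weakly Kurtz engulfing. -/
open Filter

namespace CichonAnalog

/-! ### auxiliary lemmas -/

section Aux
variable {A : Set ℕ}

theorem recIn_of_natPartrec {f : ℕ →. ℕ} (hf : Nat.Partrec f) : RecursiveIn A f := by
  induction hf with
  | zero => exact .zero
  | succ => exact .succ
  | left => exact .left
  | right => exact .right
  | pair _ _ ih₁ ih₂ => exact .pair ih₁ ih₂
  | comp _ _ ih₁ ih₂ => exact .comp ih₁ ih₂
  | prec _ _ ih₁ ih₂ => exact .prec ih₁ ih₂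
  | rfind _ ih => exact .rfind ih

theorem recIn_of_eq {f g : ℕ →. ℕ} (hf : RecursiveIn A f) (h : ∀ n, f n = g n) :
    RecursiveIn A g := (funext h : f = g) ▸ hf

theorem recIn_total_of_computable {c : ℕ → ℕ} (hc : Computable c) : RecursiveIn A ↑c :=
  recIn_of_natPartrec (Partrec.nat_iff.1 hc)

theorem recIn_of_computableIn {c : ℕ → ℕ} (hc : ComputableIn A c) : RecursiveIn A ↑c := by
  refine recIn_of_eq hc fun n => ?_
  simp

theorem computableIn_pair' {f : ℕ × ℕ → List (List Bool)}
    (hrec : RecursiveIn A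
      (fun n => Part.some (Encodable.encode (f (n.unpair.1, n.unpair.2))))) :
    ComputableIn A f := by
  refine recIn_of_eq hrec fun n => ?_
  simp [Encodable.decode_prod_val]

end Aux

open Nat.Partrec (Code) in
theorem exists_c0 : ∃ c0 : Nat.Partrec.Code, ∀ m : ℕ,
    c0.eval m = (Denumerable.ofNat Code m.unpair.1.unpair.1).eval m.unpair.1.unpair.2 := by
  have h : Partrec fun m : ℕ =>
      (Denumerable.ofNat Code m.unpair.1.unpair.1).eval m.unpair.1.unpair.2 := by
    have h1 : Computable fun m : ℕ => (Denumerable.ofNat Code m.unpair.1.unpair.1) :=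
      (Computable.ofNat Code).comp
        (((Primrec.fst.comp Primrec.unpair).comp (Primrec.fst.comp Primrec.unpair)).to_comp)
    have h2 : Computable fun m : ℕ => m.unpair.1.unpair.2 :=
      ((Primrec.snd.comp Primrec.unpair).comp (Primrec.fst.comp Primrec.unpair)).to_comp
    exact Nat.Partrec.Code.eval_part.comp h1 h2
  obtain ⟨c0, hc0⟩ := Nat.Partrec.Code.exists_code.1 (Partrec.nat_iff.1 h)
  exact ⟨c0, fun m => by rw [hc0]⟩

/-- the bit guessed by the DNR function -/
def kbit (h : ℕ → ℕ) (d : ℕ → ℕ → ℕ) (e n : ℕ) : Bool := decide (h (d e n) = 0)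

/-- the guessed string of length `m` -/
def kstr (h : ℕ → ℕ) (d : ℕ → ℕ → ℕ) (e : ℕ) : ℕ → List Bool
  | 0 => []
  | m + 1 => kstr h d e m ++ [kbit h d e m]

theorem kstr_length (h : ℕ → ℕ) (d : ℕ → ℕ → ℕ) (e m : ℕ) : (kstr h d e m).length = m := by
  induction m with
  | zero => rfl
  | succ m ih => simp [kstr, ih]

theorem kstr_getD (h : ℕ → ℕ) (d : ℕ → ℕ → ℕ) (e : ℕ) :
    ∀ m j, j < m → (kstr h d e m).getD j false = kbit h d e j := by
  intro m
  induction m with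
  | zero => omega
  | succ m ih =>
    intro j hj
    rcases Nat.lt_or_ge j m with hjm | hjm
    · rw [kstr, List.getD_append _ _ _ _ (by rw [kstr_length]; exact hjm)]
      exact ih j hjm
    · have hjm : j = m := by omega
      subst hjm
      rw [kstr, List.getD_append_right _ _ _ _ (by rw [kstr_length])]
      simp [kstr_length]

/-- helper functions -/
def kv (d : ℕ → ℕ → ℕ) (t : ℕ) : ℕ := d t.unpair.1 t.unpair.2.unpair.1

def ku (m : ℕ) : ℕ :=
  Encodable.encode
    (((Encodable.decode (α := List Bool) m.unpair.1.unpair.2.unpair.2).getD []) ++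
      [decide (m.unpair.2 = 0)])

def kw (i : ℕ) : ℕ :=
  Encodable.encode ([(Encodable.decode (α := List Bool) i).getD []] : List (List Bool))

theorem ku_computable : Computable ku := by
  have h1 : Primrec fun m : ℕ => m.unpair.1.unpair.2.unpair.2 :=
    (Primrec.snd.comp Primrec.unpair).comp
      ((Primrec.snd.comp Primrec.unpair).comp (Primrec.fst.comp Primrec.unpair))
  have h2 : Primrec fun m : ℕ =>
      ((Encodable.decode (α := List Bool) m.unpair.1.unpair.2.unpair.2).getD []) :=
    Primrec.option_getD.comp (Primrec.decode.comp h1) (Primrec.const [])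
  have h3 : Primrec fun m : ℕ => [decide (m.unpair.2 = 0)] :=
    Primrec.list_cons.comp
      (Primrec.eq.comp (Primrec.snd.comp Primrec.unpair) (Primrec.const 0)).decide
      (Primrec.const [])
  exact (Primrec.encode.comp (Primrec.list_append.comp h2 h3)).to_comp

theorem kw_computable : Computable kw :=
  (Primrec.encode.comp (Primrec.list_cons.comp
    (Primrec.option_getD.comp Primrec.decode (Primrec.const [])) (Primrec.const []))).to_comp

theorem kv_computable {d : ℕ → ℕ → ℕ} (hd : Computable fun p : ℕ × ℕ => d p.1 p.2) :
    Computable (kv d) :=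
  hd.comp (((Primrec.fst.comp Primrec.unpair).pair
    ((Primrec.fst.comp Primrec.unpair).comp (Primrec.snd.comp Primrec.unpair))).to_comp)

theorem recIn_main {A : Set ℕ} {h : ℕ → ℕ} (hh : RecursiveIn A ↑h) {d : ℕ → ℕ → ℕ}
    (hd : Computable fun p : ℕ × ℕ => d p.1 p.2) :
    ComputableIn A fun p : ℕ × ℕ => ([kstr h d p.1 p.2] : List (List Bool)) := by
  -- the step function
  have hstep : RecursiveIn A ↑(fun t => ku (Nat.pair t (h (kv d t)))) := by
    have hhv : RecursiveIn A ↑(fun t => h (kv d t)) :=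
      recIn_of_eq (.comp hh (recIn_total_of_computable (kv_computable hd)))
        (fun n => by exact Part.bind_some _ _)
    have hpairfn : RecursiveIn A ↑(fun t => Nat.pair t (h (kv d t))) :=
      recIn_of_eq (.pair (recIn_total_of_computable Computable.id) hhv)
        (fun n => by simp [Seq.seq])
    exact recIn_of_eq (.comp (recIn_total_of_computable ku_computable) hpairfn)
      (fun n => by exact Part.bind_some _ _)
  have hbase : RecursiveIn A ↑(fun _ : ℕ => Encodable.encode ([] : List Bool)) :=
    recIn_total_of_computable (Computable.const _)
  have hP := RecursiveIn.prec hbase hstep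
  -- evaluation of the primitive recursion
  have heval : ∀ a m : ℕ,
      (m.rec ((↑(fun _ : ℕ => Encodable.encode ([] : List Bool)) : ℕ →. ℕ) a)
        (fun y IH => do
          let i ← IH
          (↑(fun t => ku (Nat.pair t (h (kv d t)))) : ℕ →. ℕ)
            (Nat.pair a (Nat.pair y i))) : Part ℕ) =
      Part.some (Encodable.encode (kstr h d a m)) := by
    intro a m
    induction m with
    | zero => rfl
    | succ m ih =>
      show (_ >>= _) = _
      rw [ih]
      simp only [PFun.coe_val, Part.bind_some]
      simp [ku, kv, Nat.unpair_pair, Encodable.encodek, kstr, kbit]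
  apply computableIn_pair'
  refine recIn_of_eq (.comp (recIn_total_of_computable kw_computable) hP) fun n => ?_
  show (Nat.unpaired _ n : Part ℕ) >>= _ = _
  rw [Nat.unpaired, heval]
  refine (Part.bind_some _ _).trans ?_
  simp [kw, Encodable.encodek]

theorem listMeasure_single (σ : List Bool) : listMeasure [σ] = 1 / 2 ^ σ.length := by
  classical
  have key : ∀ k, k = σ.length →
      ((Finset.univ.filter fun v : Fin k → Bool =>
        ∃ τ ∈ [σ], τ <+: List.ofFn v).card : ℚ) / 2 ^ k = 1 / 2 ^ σ.length := by
    rintro k rfl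
    have hcard : (Finset.univ.filter fun v : Fin σ.length → Bool =>
        ∃ τ ∈ [σ], τ <+: List.ofFn v) = {σ.get} := by
      ext v
      simp only [Finset.mem_filter, Finset.mem_univ, true_and, List.mem_singleton,
        Finset.mem_singleton]
      constructor
      · rintro ⟨τ, hτ, hpre⟩
        rw [hτ] at hpre
        have hofn : List.ofFn v = σ := (hpre.eq_of_length (by simp)).symm
        exact List.ofFn_injective (hofn.trans (List.ofFn_get σ).symm)
      · rintro rfl
        exact ⟨σ, rfl, by rw [List.ofFn_get]⟩
    rw [hcard]
    simp
  exact key _ (by simp)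


/-- every PA oracle is weakly Kurtz engulfing. -/
theorem stmt6 (A : Set ℕ) (hA : PA A) : WeaklyKurtzEngulfing A := by
  classical
  obtain ⟨h, hcomp, hle, hdnr⟩ := hA
  obtain ⟨c0, hc0⟩ := exists_c0
  set d : ℕ → ℕ → ℕ := fun e n => Encodable.encode (c0.curry (Nat.pair e n)) with hd
  have keyd : ∀ e n, phi (d e n) (d e n) = phi e n := by
    intro e n
    simp only [phi, hd, Denumerable.ofNat_encode, Nat.Partrec.Code.eval_curry]
    rw [hc0]
    simp
  have dcomp : Computable fun p : ℕ × ℕ => d p.1 p.2 :=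
    (Primrec.encode.comp (Nat.Partrec.Code.primrec₂_curry.comp (Primrec.const c0)
      (Primrec₂.natPair.comp Primrec.fst Primrec.snd))).to_comp
  refine ⟨fun e m => [kstr h d e m], recIn_main (recIn_of_computableIn hcomp) dcomp,
    fun i m => ?_, fun x hx => ?_⟩
  · rw [listMeasure_single, kstr_length]
    exact le_of_eq (by rw [div_pow, one_pow])
  · -- x computable: get a code
    obtain ⟨c, hcx⟩ := Nat.Partrec.Code.exists_code.1 hx
    have hceval : ∀ n, c.eval n = Part.some (Encodable.encode (x n)) := by
      intro n
      rw [hcx]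
      simp
    refine ⟨Encodable.encode c, Set.mem_iInter.2 fun m => ?_⟩
    have hbit : ∀ n, kbit h d (Encodable.encode c) n = x n := by
      intro n
      have hmem : Encodable.encode (x n) ∈ phi (d (Encodable.encode c) n)
          (d (Encodable.encode c) n) := by
        rw [keyd]
        simp [phi, Denumerable.ofNat_encode, hceval n]
      have hne := hdnr _ _ hmem
      have hle' := hle (d (Encodable.encode c) n)
      cases hxn : x n with
      | true =>
        rw [hxn] at hne
        have : Encodable.encode true = 1 := rfl
        rw [this] at hne
        have : h (d (Encodable.encode c) n) = 0 := by omega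
        simp [kbit, this]
      | false =>
        rw [hxn] at hne
        have : Encodable.encode false = 0 := rfl
        rw [this] at hne
        simp [kbit, hne]
    show x ∈ ClopSet [kstr h d (Encodable.encode c) m]
    refine Set.mem_iUnion.2 ⟨kstr h d (Encodable.encode c) m, Set.mem_iUnion.2 ⟨by simp, ?_⟩⟩
    intro j hj
    rw [kstr_length] at hj
    rw [kstr_getD h d _ m j hj, hbit]

end CichonAnalog
end

section
/- For every oracle A ⊆ ℕ the following are equivalent: (i) A is of hyperimmune degree; (ii) A computes a function not traced by any partial trace; (iii) for every partial computable function g, there exists f ≤_T A such that f is not traced by any (D,g)-trace for any c.e. set D. -/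
open Filter

namespace CichonAnalog

/-! ### Auxiliary lemmas for Statement 9 -/

section Stmt9Aux

open Nat.Partrec (Code)
open Encodable Denumerable Nat.Partrec.Code

theorem RecursiveIn.of_partrec {A : Set ℕ} {f : ℕ →. ℕ} (h : Nat.Partrec f) :
    RecursiveIn A f := by
  induction h with
  | zero => exact .zero
  | succ => exact .succ
  | left => exact .left
  | right => exact .right
  | pair _ _ ih1 ih2 => exact .pair ih1 ih2
  | comp _ _ ih1 ih2 => exact .comp ih1 ih2
  | prec _ _ ih1 ih2 => exact .prec ih1 ih2
  | rfind _ ih => exact .rfind ih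

theorem RecursiveIn.of_eq {A : Set ℕ} {f g : ℕ →. ℕ} (h : RecursiveIn A f)
    (H : ∀ n, f n = g n) : RecursiveIn A g := (funext H : f = g) ▸ h

theorem computableIn_nat_iff {A : Set ℕ} {f : ℕ → ℕ} :
    ComputableIn A f ↔ RecursiveIn A (fun n => Part.some (f n)) := by
  unfold ComputableIn PartrecIn
  constructor <;> intro h <;> refine h.of_eq fun n => ?_ <;>
    simp [Encodable.decode_nat, Encodable.encode_nat]

theorem computableIn_of_computable {A : Set ℕ} {f : ℕ → ℕ} (h : Computable f) :
    ComputableIn A f :=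
  computableIn_nat_iff.2 (RecursiveIn.of_partrec (Partrec.nat_iff.1 h))

theorem natPartrec_of_primrec {f : ℕ → ℕ} (h : Primrec f) :
    Nat.Partrec (fun n => Part.some (f n)) :=
  Nat.Partrec.of_primrec (Primrec.nat_iff.1 h)

/-- running max of `p` on `{0,…,n}`. -/
def maxPref (p : ℕ → ℕ) : ℕ → ℕ
  | 0 => p 0
  | n + 1 => max (maxPref p n) (p (n + 1))

theorem le_maxPref (p : ℕ → ℕ) {m n : ℕ} (h : m ≤ n) : p m ≤ maxPref p n := by
  induction n with
  | zero => simp_all [maxPref]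
  | succ k ih =>
    rcases Nat.lt_or_ge m (k+1) with h' | h'
    · exact le_trans (ih (Nat.lt_succ_iff.1 h')) (le_max_left _ _)
    · have : m = k + 1 := le_antisymm h h'
      subst this; exact le_max_right _ _

theorem maxPref_computableIn {A : Set ℕ} {p : ℕ → ℕ} (hp : ComputableIn A p) :
    ComputableIn A (maxPref p) := by
  rw [computableIn_nat_iff] at hp ⊢
  have h0 : RecursiveIn A fun _ : ℕ => Part.some (p 0) :=
    (RecursiveIn.comp hp RecursiveIn.zero).of_eq fun n => by
      simp [show (pure 0 : ℕ →. ℕ) n = Part.some 0 from rfl]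
  have q1 : RecursiveIn A fun m : ℕ => Part.some (p (m.unpair.2.unpair.1 + 1)) :=
    (RecursiveIn.comp hp (RecursiveIn.of_partrec
      (natPartrec_of_primrec (f := fun m : ℕ => m.unpair.2.unpair.1 + 1)
        (Primrec.succ.comp ((Primrec.fst.comp Primrec.unpair).comp
          (Primrec.snd.comp Primrec.unpair)))))).of_eq fun n => by simp
  have q2 : RecursiveIn A fun m : ℕ => Part.some (m.unpair.2.unpair.2) :=
    RecursiveIn.of_partrec (natPartrec_of_primrec
      ((Primrec.snd.comp Primrec.unpair).comp (Primrec.snd.comp Primrec.unpair)))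
  have pr : RecursiveIn A fun m : ℕ =>
      Part.some (Nat.pair (m.unpair.2.unpair.2) (p (m.unpair.2.unpair.1 + 1))) :=
    (RecursiveIn.pair q2 q1).of_eq fun n => by simp [Seq.seq]
  have gstep : RecursiveIn A fun m : ℕ =>
      Part.some (max (m.unpair.2.unpair.2) (p (m.unpair.2.unpair.1 + 1))) :=
    (RecursiveIn.comp (RecursiveIn.of_partrec
        (natPartrec_of_primrec (f := fun t : ℕ => max t.unpair.1 t.unpair.2)
          (Primrec.nat_max.comp (Primrec.fst.comp Primrec.unpair)
            (Primrec.snd.comp Primrec.unpair)))) pr).of_eq fun n => by simp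
  have F := RecursiveIn.prec h0 gstep
  have pairing : RecursiveIn A fun n : ℕ => Part.some (Nat.pair 0 n) :=
    RecursiveIn.of_partrec (natPartrec_of_primrec
      (Primrec₂.natPair.comp (Primrec.const 0) Primrec.id))
  exact (RecursiveIn.comp F pairing).of_eq fun n => by
    simp only [Part.bind_eq_bind, Part.bind_some, Nat.unpaired, Nat.unpair_pair]
    induction n with
    | zero => simp [maxPref]
    | succ k ih => simp [ih, maxPref, Nat.unpair_pair]

/-- the encoding of `Finset ℕ` used by its `Primcodable` instance -/
abbrev encS : Finset ℕ → ℕ := @Encodable.encode (Finset ℕ) Denumerable.toEncodable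

theorem eqv_nat_symm_emb : (Denumerable.eqv ℕ).symm.toEmbedding = Function.Embedding.refl ℕ := by
  ext x
  exact Denumerable.ofNat_nat x

theorem ofNat_finset_eq (v : ℕ) :
    Denumerable.ofNat (Finset ℕ) v = Denumerable.raise'Finset (Denumerable.ofNat (List ℕ) v) 0 := by
  have h : @Encodable.decode (Finset ℕ) Denumerable.toEncodable v =
      some (Finset.map (Denumerable.eqv ℕ).symm.toEmbedding
        (Denumerable.raise'Finset (Denumerable.ofNat (List ℕ) v) 0)) := rfl
  have := Denumerable.ofNat_of_decode h
  rw [this, eqv_nat_symm_emb, Finset.map_refl]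

theorem mem_raise'Finset {x : ℕ} {l : List ℕ} {n : ℕ} :
    x ∈ Denumerable.raise'Finset l n ↔ x ∈ Denumerable.raise' l n := by
  show x ∈ (Denumerable.raise' l n : Multiset ℕ) ↔ _
  exact Multiset.mem_coe

theorem mem_raise'_le {x : ℕ} : ∀ {l : List ℕ} {n : ℕ}, x ∈ Denumerable.raise' l n →
    x ≤ n + l.foldr (· + ·) 0 + l.length
  | [], n => by simp [Denumerable.raise']
  | m :: l, n => by
    intro hx
    rcases List.mem_cons.1 (by simpa [Denumerable.raise'] using hx) with h | h
    · subst h; simp only [List.foldr_cons, List.length_cons]; omega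
    · have := mem_raise'_le (l := l) (n := m + n + 1) h
      simp only [List.foldr_cons, List.length_cons]
      omega

theorem mem_finset_le {S : Finset ℕ} {x : ℕ} (hx : x ∈ S) :
    x ≤ (Denumerable.ofNat (List ℕ) (encS S)).foldr (· + ·) 0 +
      (Denumerable.ofNat (List ℕ) (encS S)).length := by
  have h1 : Denumerable.ofNat (Finset ℕ) (encS S) = S := Denumerable.ofNat_encode S
  rw [← h1, ofNat_finset_eq] at hx
  have := mem_raise'_le (mem_raise'Finset.1 hx)
  omega

/-- the finset `{0, …, k-1}` obtained through the `Denumerable` encoding -/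
def rangeF (k : ℕ) : Finset ℕ :=
  Denumerable.ofNat (Finset ℕ) (Encodable.encode (List.replicate k (0 : ℕ)))

theorem mem_raise'_replicate {x : ℕ} : ∀ {k n : ℕ},
    x ∈ Denumerable.raise' (List.replicate k 0) n ↔ n ≤ x ∧ x < n + k := by
  intro k
  induction k with
  | zero => intro n; simp [Denumerable.raise']
  | succ m ih =>
    intro n
    simp only [List.replicate_succ, Denumerable.raise', List.mem_cons, ih]
    omega

theorem mem_rangeF {x k : ℕ} : x ∈ rangeF k ↔ x < k := by
  rw [rangeF, ofNat_finset_eq, Denumerable.ofNat_encode, mem_raise'Finset,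
    mem_raise'_replicate]
  omega

theorem length_raise' : ∀ (l : List ℕ) (n : ℕ), (Denumerable.raise' l n).length = l.length
  | [], _ => rfl
  | m :: l, n => by simp [Denumerable.raise', length_raise' l]

theorem card_rangeF (k : ℕ) : (rangeF k).card = k := by
  rw [rangeF, ofNat_finset_eq, Denumerable.ofNat_encode]
  show Multiset.card _ = k
  simp [Denumerable.raise'Finset, length_raise']

theorem computable_rangeF : Computable rangeF := by
  have h1 : Computable fun k : ℕ => List.replicate k (0 : ℕ) := by
    have : Primrec fun k : ℕ => (List.range k).map fun _ => 0 :=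
      Primrec.list_map Primrec.list_range (Primrec.const 0).to₂
    exact (this.of_eq fun k => by simp [List.map_const']).to_comp
  exact (Computable.ofNat (Finset ℕ)).comp (Computable.encode.comp h1)

theorem dominates_of_trace {D : Set ℕ} {σ : ℕ →. Finset ℕ} (hD : D.Infinite)
    {ψ : ℕ →. ℕ} (hψ : Partrec ψ) (hψd : ∀ a, a ∈ D ↔ (ψ a).Dom)
    (hσ : Partrec σ) (hσd : D ⊆ σ.Dom) :
    ∃ h : ℕ → ℕ, Computable h ∧
      ∀ m, ∃ n S, m ≤ n ∧ n ∈ D ∧ S ∈ σ n ∧ ∀ x ∈ S, x ≤ h m := by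
  have hψn : Nat.Partrec ψ := Partrec.nat_iff.1 hψ
  have hσn : Nat.Partrec fun n => (σ n).map encS := by
    have := hσ
    unfold Partrec at this
    exact this.of_eq fun n => by simp [Encodable.decode_nat]
  obtain ⟨cψ, hcψ⟩ := exists_code.1 hψn
  obtain ⟨cσ, hcσ⟩ := exists_code.1 hσn
  set bound : ℕ → ℕ := fun v =>
    (Denumerable.ofNat (List ℕ) v).foldr (· + ·) 0 +
      (Denumerable.ofNat (List ℕ) v).length with hbound_def
  set F : ℕ → ℕ → Option ℕ := fun m t =>
    if m ≤ t.unpair.1 then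
      (evaln t.unpair.2 cψ t.unpair.1).bind fun _ =>
        (evaln t.unpair.2 cσ t.unpair.1).map bound
    else none with hF_def
  have hev : ∀ c : Code, Primrec fun t : ℕ => evaln t.unpair.2 c t.unpair.1 := fun c =>
    primrec_evaln.comp
      (((Primrec.snd.comp Primrec.unpair).pair (Primrec.const c)).pair
        (Primrec.fst.comp Primrec.unpair))
  have hbound : Primrec bound := by
    have h1 : Primrec fun v : ℕ => (Denumerable.ofNat (List ℕ) v).foldr (· + ·) 0 := by
      have := Primrec.list_foldr (Primrec.ofNat (List ℕ)) (Primrec.const 0)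
        ((Primrec.nat_add.comp (Primrec.fst.comp Primrec.snd)
          (Primrec.snd.comp Primrec.snd)).to₂)
      exact this.of_eq fun v => rfl
    exact Primrec.nat_add.comp h1 (Primrec.list_length.comp (Primrec.ofNat (List ℕ)))
  have hF : Computable₂ F := by
    have hc : PrimrecPred fun p : ℕ × ℕ => p.1 ≤ p.2.unpair.1 :=
      Primrec.nat_le.comp Primrec.fst ((Primrec.fst.comp Primrec.unpair).comp Primrec.snd)
    have hthen : Primrec fun p : ℕ × ℕ =>
        (evaln p.2.unpair.2 cψ p.2.unpair.1).bind fun _ =>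
          (evaln p.2.unpair.2 cσ p.2.unpair.1).map bound :=
      Primrec.option_bind ((hev cψ).comp Primrec.snd)
        ((Primrec.option_map ((hev cσ).comp (Primrec.snd.comp Primrec.fst))
          ((hbound.comp Primrec.snd).to₂)).to₂)
    exact (Primrec₂.to_comp
      ((Primrec.ite hc hthen (Primrec.const none)).to₂ : Primrec₂ F))
  set H : ℕ →. ℕ := fun m => Nat.rfindOpt (F m) with hH_def
  have hH : Partrec H := Partrec.rfindOpt hF
  have tot : ∀ m, (H m).Dom := by
    intro m
    rw [hH_def]
    rw [Nat.rfindOpt_dom]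
    obtain ⟨n, hnD, hmn⟩ := hD.exists_gt m
    have hψdom : (ψ n).Dom := (hψd n).1 hnD
    obtain ⟨k1, hk1⟩ := evaln_complete.1 (by rw [hcψ]; exact Part.get_mem hψdom :
      (ψ n).get hψdom ∈ eval cψ n)
    have hσdom : (σ n).Dom := hσd hnD
    have hvmem : encS ((σ n).get hσdom) ∈ eval cσ n := by
      rw [hcσ]; exact Part.mem_map _ (Part.get_mem hσdom)
    obtain ⟨k2, hk2⟩ := evaln_complete.1 hvmem
    refine ⟨Nat.pair n (max k1 k2), bound (encS ((σ n).get hσdom)), ?_⟩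
    have e1 : evaln (max k1 k2) cψ n = some ((ψ n).get hψdom) :=
      evaln_mono (le_max_left _ _) hk1
    have e2 : evaln (max k1 k2) cσ n = some (encS ((σ n).get hσdom)) :=
      evaln_mono (le_max_right _ _) hk2
    simp only [hF_def, Nat.unpair_pair]
    rw [if_pos hmn.le, e1, e2]
    simp
  refine ⟨fun m => (H m).get (tot m), hH.of_eq_tot (fun m => Part.get_mem _), ?_⟩
  intro m
  obtain ⟨t, ht⟩ := Nat.rfindOpt_spec (Part.get_mem (tot m))
  rw [Option.mem_def, hF_def] at ht
  beta_reduce at ht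
  by_cases hmt : m ≤ t.unpair.1
  · rw [if_pos hmt] at ht
    obtain ⟨w, hw, hv⟩ := Option.bind_eq_some_iff.1 ht
    obtain ⟨v, hv2, hbv⟩ := Option.map_eq_some_iff.1 hv
    have hnD : t.unpair.1 ∈ D := by
      refine (hψd _).2 ?_
      have : w ∈ eval cψ t.unpair.1 := evaln_sound hw
      rw [hcψ] at this
      exact Part.dom_iff_mem.2 ⟨w, this⟩
    have hvσ : v ∈ (σ t.unpair.1).map encS := by
      have : v ∈ eval cσ t.unpair.1 := evaln_sound hv2
      rwa [hcσ] at this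
    obtain ⟨S, hS, hSe⟩ := (Part.mem_map_iff _).1 hvσ
    refine ⟨t.unpair.1, S, hmt, hnD, hS, fun x hx => ?_⟩
    calc x ≤ bound (encS S) := mem_finset_le hx
    _ = (H m).get (tot m) := by rw [hSe, hbv]
  · rw [if_neg hmt] at ht
    exact absurd ht (by simp)

end Stmt9Aux

/-- `A` is of hyperimmune degree iff `A` computes a function not traced by
any partial trace, iff for every partial computable `g` there is `f ≤_T A` not traced
by any `(D, g)`-trace for any c.e. `D`. -/
theorem stmt9 (A : Set ℕ) :
    [HyperimmuneDegree A,
     ∃ f : ℕ → ℕ, ComputableIn A f ∧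
       ∀ (D : Set ℕ) (g : ℕ →. ℕ) (σ : ℕ →. Finset ℕ),
         IsDGTrace D g σ → ¬ DGTraces D σ f,
     ∀ g : ℕ →. ℕ, Partrec g → ∃ f : ℕ → ℕ, ComputableIn A f ∧
       ∀ (D : Set ℕ) (σ : ℕ →. Finset ℕ),
         IsDGTrace D g σ → ¬ DGTraces D σ f].TFAE := by
  tfae_have 1 → 2 := by
    rintro ⟨p, hpA, hp2⟩
    refine ⟨maxPref p, maxPref_computableIn hpA, ?_⟩
    rintro D g σ ⟨hDinf, ⟨ψ, hψ, hψd⟩, -, -, -, hσp, hσdom, -⟩ hTr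
    obtain ⟨N, hN⟩ := Filter.eventually_atTop.1 hTr
    obtain ⟨h, hhc, hprop⟩ := dominates_of_trace hDinf hψ hψd hσp hσdom
    have hdom : ∀ m, N ≤ m → p m ≤ h m := by
      intro m hm
      obtain ⟨n, S, hmn, hnD, hSσ, hbd⟩ := hprop m
      have hfn : maxPref p n ∈ S := hN n (le_trans hm hmn) hnD S hSσ
      exact le_trans (le_maxPref p hmn) (hbd _ hfn)
    obtain ⟨m, hm1, hm2⟩ :=
      ((hp2 h hhc).and_eventually (Filter.eventually_atTop.2 ⟨N, hdom⟩)).exists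
    omega
  tfae_have 2 → 3 := by
    rintro ⟨f, hfA, hf⟩ g hg
    exact ⟨f, hfA, fun D σ hT => hf D g σ hT⟩
  tfae_have 3 → 1 := by
    intro h3
    set g0 : ℕ →. ℕ := fun n =>
      (Nat.Partrec.Code.eval (Denumerable.ofNat Nat.Partrec.Code n.unpair.1) n).map
        fun v => max n (v + 2) with hg0_def
    have hg0 : Partrec g0 := by
      have hcode : Computable fun n : ℕ => Denumerable.ofNat Nat.Partrec.Code n.unpair.1 :=
        (Computable.ofNat _).comp (Primrec.fst.comp Primrec.unpair).to_comp
      have heval : Partrec fun n : ℕ =>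
          Nat.Partrec.Code.eval (Denumerable.ofNat Nat.Partrec.Code n.unpair.1) n :=
        Nat.Partrec.Code.eval_part.comp hcode Computable.id
      exact heval.map (Primrec₂.to_comp ((Primrec.nat_max.comp Primrec.fst
        (Primrec.succ.comp (Primrec.succ.comp Primrec.snd))).to₂))
    obtain ⟨f, hfA, hf⟩ := h3 g0 hg0
    refine ⟨f, hfA, fun h hhc => ?_⟩
    by_contra hcon
    rw [Filter.not_frequently] at hcon
    have hcon' : ∀ᶠ n in atTop, f n ≤ h n := hcon.mono fun n hn => not_lt.1 hn
    have hhn : Nat.Partrec (h : ℕ →. ℕ) := Partrec.nat_iff.1 (Computable.partrec hhc)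
    obtain ⟨c, hc⟩ := Nat.Partrec.Code.exists_code.1 hhn
    set e : ℕ := Encodable.encode c with he_def
    set D : Set ℕ := {n | n.unpair.1 = e} with hD_def
    have hevalc : ∀ n ∈ D,
        Nat.Partrec.Code.eval (Denumerable.ofNat Nat.Partrec.Code n.unpair.1) n
          = Part.some (h n) := by
      intro n hn
      have hne : n.unpair.1 = e := hn
      rw [hne, he_def, Denumerable.ofNat_encode, hc]
      rfl
    set σ0 : ℕ →. Finset ℕ := fun n => Part.some (rangeF (h n + 1)) with hσ0_def
    have hσ0 : Partrec σ0 :=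
      Computable.partrec (computable_rangeF.comp (Primrec.succ.to_comp.comp hhc))
    have hDinf : D.Infinite := by
      apply Set.infinite_of_injective_forall_mem (f := fun k : ℕ => Nat.pair e k)
        (fun a b hab => by
          have := congrArg (fun x => x.unpair.2) hab
          simpa using this)
      intro k; simp [hD_def]
    have hCE : CE D := by
      refine ⟨fun n => Nat.rfind fun _ => Part.some (decide (n.unpair.1 = e)), ?_, ?_⟩
      · apply Partrec.rfind
        have hpred : Primrec fun n : ℕ => decide (n.unpair.1 = e) :=
          (Primrec.eq.comp (Primrec.fst.comp Primrec.unpair) (Primrec.const e)).decide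
        have : Computable₂ fun (n : ℕ) (_ : ℕ) => decide (n.unpair.1 = e) :=
          ((hpred.comp Primrec.fst).to_comp).to₂
        exact this.partrec₂
      · intro a
        constructor
        · intro ha
          exact Nat.rfind_dom.2 ⟨0, by simpa [hD_def] using ha, fun {_} _ => trivial⟩
        · intro hd
          obtain ⟨n, htrue, -⟩ := Nat.rfind_dom.1 hd
          simpa [hD_def] using htrue
    have hgdom : D ⊆ g0.Dom := by
      intro n hn
      show (g0 n).Dom
      rw [hg0_def]
      beta_reduce
      rw [hevalc n hn]
      simp
    have hgge : ∀ n, ∀ y ∈ g0 n, n ≤ y := by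
      intro n y hy
      obtain ⟨v, -, rfl⟩ := (Part.mem_map_iff _).1 hy
      exact le_max_left _ _
    have hσdom : D ⊆ σ0.Dom := fun n _ => trivial
    have hcard : ∀ n ∈ D, ∀ S ∈ σ0 n, ∀ b ∈ g0 n, S.card < b := by
      intro n hn S hS b hb
      rw [hσ0_def] at hS
      rw [Part.mem_some_iff] at hS
      subst hS
      have hb' : b ∈ (Part.some (h n)).map fun v => max n (v + 2) := by
        rw [← hevalc n hn]; exact hb
      obtain ⟨v, hv, rfl⟩ := (Part.mem_map_iff _).1 hb'
      rw [Part.mem_some_iff] at hv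
      subst hv
      rw [card_rangeF]
      exact lt_of_lt_of_le (by omega) (le_max_right _ _)
    have hTr : DGTraces D σ0 f := by
      refine hcon'.mono fun n hfn hnD S hS => ?_
      rw [hσ0_def] at hS
      rw [Part.mem_some_iff] at hS
      subst hS
      exact mem_rangeF.2 (by omega)
    exact hf D σ0 ⟨hDinf, hCE, hg0, hgdom, hgge, hσ0, hσdom, hcard⟩ hTr
  tfae_finish


end CichonAnalog
end
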